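/- Let d ≥ 1 and let r ∈ ℝ^d be a vector with r_n > 0 for all n and Σ_{n=1}^d r_n = 1. Let 𝔲 be a nonempty subset of {1,…,d}, and define the error ε := d · Σ_{n∈𝔲} r_n and the length ℓ := √(Σ_{n=1}^d (ln(d·r_n))²). Then ε ≥ |𝔲| · exp(−ℓ/√|𝔲|) ≥ exp(−ℓ). In particular, e^ℓ · ε ≥ 1. -/
import Mathlib


open Real

/-- **Complexity–error trade-off, core inequality (classical case).**
If `r` is a strictly positive probability vector on `d` states, `𝔲` a nonempty set of
undesired states, `ε = d ∑_{n∈𝔲} r n` the reset error, and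
`ℓ = √(∑ n, (log (d r n))²)` the unconstrained geodesic length, then
`ε ≥ |𝔲| exp(−ℓ/√|𝔲|) ≥ exp(−ℓ)`, and in particular `e^ℓ ε ≥ 1`. -/
theorem error_complexity_tradeoff_classical
    (d : ℕ) (hd : 1 ≤ d) (r : Fin d → ℝ)
    (hr : ∀ n, 0 < r n) (hsum : ∑ n, r n = 1)
    (𝔲 : Finset (Fin d)) (h𝔲 : 𝔲.Nonempty) :
    ((d : ℝ) * ∑ n ∈ 𝔲, r n ≥
      (𝔲.card : ℝ) *
        Real.exp (-(Real.sqrt (∑ n, (Real.log (d * r n)) ^ 2)) / Real.sqrt (𝔲.card))) ∧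
    ((𝔲.card : ℝ) *
        Real.exp (-(Real.sqrt (∑ n, (Real.log (d * r n)) ^ 2)) / Real.sqrt (𝔲.card)) ≥
      Real.exp (-(Real.sqrt (∑ n, (Real.log (d * r n)) ^ 2)))) ∧
    (Real.exp (Real.sqrt (∑ n, (Real.log (d * r n)) ^ 2)) *
      ((d : ℝ) * ∑ n ∈ 𝔲, r n) ≥ 1) := by
  set x : Fin d → ℝ := fun n => Real.log (d * r n) with hx
  set L : ℝ := Real.sqrt (∑ n, x n ^ 2) with hL
  have hL0 : 0 ≤ L := Real.sqrt_nonneg _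
  have hk0 : 0 < (𝔲.card : ℝ) := by exact_mod_cast Finset.card_pos.mpr h𝔲
  have hk1 : (1 : ℝ) ≤ 𝔲.card := by exact_mod_cast Finset.card_pos.mpr h𝔲
  have hsk : 0 < Real.sqrt 𝔲.card := Real.sqrt_pos.mpr hk0
  have hsk1 : (1 : ℝ) ≤ Real.sqrt 𝔲.card := by
    rw [show (1:ℝ) = Real.sqrt 1 by simp]
    exact Real.sqrt_le_sqrt hk1
  -- expressing the error as a sum of exponentials
  have hd0 : (0:ℝ) < d := by exact_mod_cast Nat.lt_of_lt_of_le Nat.zero_lt_one hd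
  have hexp : ∀ n, Real.exp (x n) = (d : ℝ) * r n := fun n =>
    Real.exp_log (mul_pos hd0 (hr n))
  have heps : (d : ℝ) * ∑ n ∈ 𝔲, r n = ∑ n ∈ 𝔲, Real.exp (x n) := by
    rw [Finset.mul_sum]
    exact Finset.sum_congr rfl fun n _ => (hexp n).symm
  -- Cauchy–Schwarz: ∑_{𝔲} x ≥ -√k * L
  have hCS : -(Real.sqrt 𝔲.card * L) ≤ ∑ n ∈ 𝔲, x n := by
    have h1 : (∑ n ∈ 𝔲, x n) ^ 2 ≤ (𝔲.card : ℝ) * ∑ n, x n ^ 2 := by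
      have := Finset.sum_mul_sq_le_sq_mul_sq 𝔲 (fun _ => (1:ℝ)) x
      simp only [one_mul, one_pow, Finset.sum_const, nsmul_eq_mul, mul_one] at this
      refine this.trans ?_
      gcongr
      exact Finset.subset_univ _
    have h2 : |∑ n ∈ 𝔲, x n| ≤ Real.sqrt ((𝔲.card : ℝ) * ∑ n, x n ^ 2) := by
      rw [← Real.sqrt_sq_eq_abs]
      exact Real.sqrt_le_sqrt h1
    have h3 : Real.sqrt ((𝔲.card : ℝ) * ∑ n, x n ^ 2)
        = Real.sqrt 𝔲.card * L := Real.sqrt_mul (le_of_lt hk0) _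
    have := neg_abs_le (∑ n ∈ 𝔲, x n)
    rw [h3] at h2
    linarith [abs_nonneg (∑ n ∈ 𝔲, x n)]
  -- Jensen: ∑_{𝔲} exp (x n) ≥ k * exp ((∑_{𝔲} x)/k)
  have hJ : (𝔲.card : ℝ) * Real.exp ((∑ n ∈ 𝔲, x n) / 𝔲.card)
      ≤ ∑ n ∈ 𝔲, Real.exp (x n) := by
    have hw : ∀ i ∈ 𝔲, (0:ℝ) ≤ (𝔲.card : ℝ)⁻¹ := fun i _ => by positivity
    have hw1 : ∑ _i ∈ 𝔲, ((𝔲.card : ℝ))⁻¹ = 1 := by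
      simp [Finset.sum_const, nsmul_eq_mul]
      field_simp
    have h := convexOn_exp.map_sum_le hw hw1 (fun i _ => Set.mem_univ (x i))
    simp only [smul_eq_mul] at h
    rw [← Finset.mul_sum, ← Finset.mul_sum, inv_mul_eq_div] at h
    have h2 := mul_le_mul_of_nonneg_left h hk0.le
    rwa [← mul_assoc, mul_inv_cancel₀ hk0.ne', one_mul] at h2
  -- combine
  have hstep : -L / Real.sqrt 𝔲.card ≤ (∑ n ∈ 𝔲, x n) / 𝔲.card := by
    have hkk : Real.sqrt 𝔲.card * Real.sqrt 𝔲.card = (𝔲.card : ℝ) :=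
      Real.mul_self_sqrt hk0.le
    have heq : -L / Real.sqrt 𝔲.card = -(Real.sqrt 𝔲.card * L) / 𝔲.card := by
      rw [div_eq_div_iff hsk.ne' hk0.ne']; linear_combination L * hkk
    rw [heq]
    gcongr
  have main : (𝔲.card : ℝ) * Real.exp (-L / Real.sqrt 𝔲.card)
      ≤ (d : ℝ) * ∑ n ∈ 𝔲, r n := by
    rw [heps]
    refine le_trans ?_ hJ
    exact mul_le_mul_of_nonneg_left (Real.exp_le_exp.mpr hstep) (le_of_lt hk0)
  have second : Real.exp (-L) ≤ (𝔲.card : ℝ) * Real.exp (-L / Real.sqrt 𝔲.card) := by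
    have h1 : -L ≤ -L / Real.sqrt 𝔲.card := by
      rw [le_div_iff₀ hsk]
      nlinarith
    calc Real.exp (-L) ≤ Real.exp (-L / Real.sqrt 𝔲.card) := Real.exp_le_exp.mpr h1
      _ ≤ (𝔲.card : ℝ) * Real.exp (-L / Real.sqrt 𝔲.card) := by
          nlinarith [Real.exp_pos (-L / Real.sqrt 𝔲.card)]
  refine ⟨main, second, ?_⟩
  have : Real.exp (-L) ≤ (d : ℝ) * ∑ n ∈ 𝔲, r n := second.trans main
  have := mul_le_mul_of_nonneg_left this (le_of_lt (Real.exp_pos L))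
  rw [← Real.exp_add] at this
  simpa using this
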